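/- Let d ≥ 1 and equip ℝ^d with the ℓ¹ norm, and let 0 < p ≤ 1. Let V = {0,1}^d with base point 0. In the Lipschitz free p-space F_p(V, |·|₁), consider the element m = ∑_{u ∈ {0,1}^{d-1}} 2^{-(d-1)} (δ(u,1) - δ(u,0)), where (u,1), (u,0) ∈ {0,1}^d append the last coordinate. Then ‖m‖_p ≥ 2^{(d-1)(1/p - 1)} = C(p, 2^{d-1}). -/

import Mathlib

/-- The ℓ¹ distance on ℝ^d. -/
noncomputable def l1dist {d : ℕ} (x y : Fin d → ℝ) : ℝ := ∑ i, |x i - y i|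

/-- A vertex of the cube {0,1}^d viewed as a point of ℝ^d. -/
def vert {d : ℕ} (v : Fin d → Bool) : Fin d → ℝ := fun i => if v i then 1 else 0

/-- An elementary molecule (δ(x) - δ(y))/|x - y|₁ over the vertex set {0,1}^d,
modelled as a function on the vertices (δ(z) being modelled as χ_z - χ_basepoint,
so that the basepoint contributions cancel). -/
noncomputable def mol {d : ℕ} (x y : Fin d → Bool) : (Fin d → Bool) → ℝ :=
  fun w => ((if w = x then (1 : ℝ) else 0) - (if w = y then 1 else 0)) /
    l1dist (vert x) (vert y)

/-- δ(v) in the Lipschitz free p-space over ({0,1}^d, ℓ¹) with basepoint 0,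
modelled as χ_v - χ_0. -/
noncomputable def deltaV {d : ℕ} (v : Fin d → Bool) : (Fin d → Bool) → ℝ :=
  fun w => (if w = v then (1 : ℝ) else 0) - (if w = (fun _ => false) then 1 else 0)

/-- The set of values (∑ |aᵢ|^p)^{1/p} over all molecular decompositions of m;
the free p-space norm of m is its infimum. -/
noncomputable def pNormSet (p : ℝ) {d : ℕ} (m : (Fin d → Bool) → ℝ) : Set ℝ :=
  {c | ∃ (n : ℕ) (a : Fin n → ℝ) (x y : Fin n → (Fin d → Bool)),
    (∀ i, x i ≠ y i) ∧ m = (∑ i, a i • mol (x i) (y i)) ∧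
    c = (∑ i, |a i| ^ p) ^ (1 / p)}

/-- Multilinear interpolation coefficient x^{(v)} = ∏ᵢ xᵢ^{(vᵢ)}. -/
noncomputable def coeffR {d : ℕ} (x : Fin d → ℝ) (v : Fin d → Bool) : ℝ :=
  ∏ i, (if v i then x i else 1 - x i)

/-- The canonical coordinatewise affine retraction r(x) = ∑_v x^{(v)} δ(v). -/
noncomputable def rMap {d : ℕ} (x : Fin d → ℝ) : (Fin d → Bool) → ℝ :=
  ∑ v : Fin d → Bool, coeffR x v • deltaV v

/- ----------------- auxiliary lemmas ----------------- -/

lemma real_rpow_add_le {p : ℝ} (hp : 0 ≤ p) (hp1 : p ≤ 1) {a b : ℝ}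
    (ha : 0 ≤ a) (hb : 0 ≤ b) : (a + b) ^ p ≤ a ^ p + b ^ p := by
  have h := NNReal.rpow_add_le_add_rpow (⟨a, ha⟩ : NNReal) (⟨b, hb⟩ : NNReal) hp hp1
  have h2 := NNReal.coe_le_coe.2 h
  exact h2

lemma rpow_sum_le_sum_rpow' {ι : Type*} (s : Finset ι) (f : ι → ℝ)
    (hf : ∀ i ∈ s, 0 ≤ f i) {p : ℝ} (hp : 0 < p) (hp1 : p ≤ 1) :
    (∑ i ∈ s, f i) ^ p ≤ ∑ i ∈ s, (f i) ^ p := by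
  induction s using Finset.cons_induction with
  | empty => simp [Real.zero_rpow hp.ne']
  | cons a s ha ih =>
    rw [Finset.sum_cons, Finset.sum_cons]
    have h1 : 0 ≤ f a := hf a (Finset.mem_cons_self a s)
    have h2 : ∀ i ∈ s, 0 ≤ f i := fun i hi => hf i (Finset.mem_cons_of_mem hi)
    calc (f a + ∑ i ∈ s, f i) ^ p ≤ f a ^ p + (∑ i ∈ s, f i) ^ p :=
          real_rpow_add_le hp.le hp1 h1 (Finset.sum_nonneg h2)
      _ ≤ f a ^ p + ∑ i ∈ s, f i ^ p := by linarith [ih h2]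

lemma l1dist_ge_one {d : ℕ} {x y : Fin d → Bool} (h : x ≠ y) :
    1 ≤ l1dist (vert x) (vert y) := by
  obtain ⟨i, hi⟩ := Function.ne_iff.mp h
  have h1 : |vert x i - vert y i| = 1 := by
    unfold vert; cases hx : x i <;> cases hy : y i <;> simp_all
  calc (1:ℝ) = |vert x i - vert y i| := h1.symm
    _ ≤ ∑ j, |vert x j - vert y j| :=
        Finset.single_le_sum (f := fun j => |vert x j - vert y j|)
          (fun j _ => abs_nonneg _) (Finset.mem_univ i)
    _ = l1dist (vert x) (vert y) := rfl

lemma abs_mol_le {d : ℕ} {x y w : Fin d → Bool} (h : x ≠ y) :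
    |mol x y w| ≤ if x = w ∨ y = w then 1 else 0 := by
  have hD : 1 ≤ l1dist (vert x) (vert y) := l1dist_ge_one h
  have hD0 : (0:ℝ) < l1dist (vert x) (vert y) := lt_of_lt_of_le one_pos hD
  unfold mol
  by_cases hx : w = x <;> by_cases hy : w = y
  · exact absurd (hx.symm.trans hy) h
  · rw [if_pos hx, if_neg hy, if_pos (Or.inl hx.symm), abs_div, abs_of_pos hD0]
    simp only [sub_zero, abs_one]
    rw [div_le_one hD0]; exact hD
  · rw [if_neg hx, if_pos hy, if_pos (Or.inr hy.symm), abs_div, abs_of_pos hD0]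
    simp only [zero_sub, abs_neg, abs_one]
    rw [div_le_one hD0]; exact hD
  · rw [if_neg hx, if_neg hy, if_neg (by tauto : ¬(x = w ∨ y = w))]
    simp

lemma sum_ite_snoc (d : ℕ) (w : Fin (d+1) → Bool) (b : Bool) :
    (∑ u : Fin d → Bool, if w = Fin.snoc u b then (1:ℝ) else 0)
      = if w (Fin.last d) = b then 1 else 0 := by
  by_cases h : w (Fin.last d) = b
  · have key : ∀ u : Fin d → Bool, (w = Fin.snoc u b) ↔ (u = Fin.init w) := by
      intro u
      constructor
      · intro he; rw [he, Fin.init_snoc]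
      · intro hu; subst hu
        conv_lhs => rw [← Fin.snoc_init_self w]
        rw [h]
    simp only [key]
    rw [if_pos h, Finset.sum_ite_eq' Finset.univ (Fin.init w) (fun _ => (1:ℝ))]
    simp
  · rw [if_neg h]
    apply Finset.sum_eq_zero
    intro u _
    rw [if_neg]
    intro he
    exact h (by rw [he, Fin.snoc_last])

lemma Mval (d : ℕ) (w : Fin (d+1) → Bool) :
    (∑ u : Fin d → Bool,
      ((2 : ℝ) ^ (d : ℝ))⁻¹ • (deltaV (Fin.snoc u true) - deltaV (Fin.snoc u false))) w
    = if w (Fin.last d) = true then ((2:ℝ)^(d:ℝ))⁻¹ else -((2:ℝ)^(d:ℝ))⁻¹ := by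
  set r : ℝ := ((2:ℝ)^(d:ℝ))⁻¹ with hrdef
  rw [Finset.sum_apply]
  simp only [Pi.smul_apply, Pi.sub_apply, deltaV, smul_eq_mul]
  have expand : ∀ u : Fin d → Bool,
      r * (((if w = Fin.snoc u true then (1:ℝ) else 0) -
            (if w = (fun _ => false) then 1 else 0)) -
           ((if w = Fin.snoc u false then (1:ℝ) else 0) -
            (if w = (fun _ => false) then 1 else 0)))
      = r * (if w = Fin.snoc u true then (1:ℝ) else 0)
        - r * (if w = Fin.snoc u false then (1:ℝ) else 0) := by
    intro u; ring
  rw [Finset.sum_congr rfl (fun u _ => expand u), Finset.sum_sub_distrib,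
    ← Finset.mul_sum, ← Finset.mul_sum, sum_ite_snoc, sum_ite_snoc]
  cases hw : w (Fin.last d) <;> simp [hw]

lemma mol_snoc {d : ℕ} (u : Fin d → Bool) :
    mol (Fin.snoc u true) (Fin.snoc u false)
      = deltaV (Fin.snoc u true) - deltaV (Fin.snoc u false) := by
  have hdist : l1dist (vert (Fin.snoc u true)) (vert (Fin.snoc u false)) = 1 := by
    unfold l1dist
    rw [Fin.sum_univ_castSucc]
    have h1 : ∀ i : Fin d,
        |vert (Fin.snoc u true) i.castSucc - vert (Fin.snoc u false) i.castSucc| = 0 := by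
      intro i; unfold vert; rw [Fin.snoc_castSucc, Fin.snoc_castSucc]; simp
    rw [Finset.sum_congr rfl (fun i _ => h1 i)]
    unfold vert; rw [Fin.snoc_last, Fin.snoc_last]; simp
  funext w
  simp only [mol, deltaV, Pi.sub_apply, hdist, div_one]
  ring

/-- Lower bound C(p,2^{d}) on the free p-norm of ∑_u 2^{-d}(δ(u,1)-δ(u,0)) in
F_p({0,1}^{d+1}, ℓ¹): the dimension here is d+1, so C(p, 2^{(d+1)-1}) = (2^d)^{1/p-1}. -/
theorem stmt14 (d : ℕ) (p : ℝ) (hp0 : 0 < p) (hp1 : p ≤ 1) :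
    ((2 : ℝ) ^ (d : ℝ)) ^ (1 / p - 1) ≤
      sInf (pNormSet p (∑ u : Fin d → Bool,
        ((2 : ℝ) ^ (d : ℝ))⁻¹ • (deltaV (Fin.snoc u true) - deltaV (Fin.snoc u false)))) := by
  set r : ℝ := ((2:ℝ)^(d:ℝ))⁻¹ with hrdef
  have h2pos : (0:ℝ) < (2:ℝ)^(d:ℝ) := Real.rpow_pos_of_pos two_pos _
  have hrpos : 0 < r := inv_pos.mpr h2pos
  set M : (Fin (d+1) → Bool) → ℝ := ∑ u : Fin d → Bool,
      r • (deltaV (Fin.snoc u true) - deltaV (Fin.snoc u false)) with hMdef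
  apply le_csInf
  · -- nonemptiness: the canonical decomposition into 2^d edge molecules
    set n : ℕ := Fintype.card (Fin d → Bool) with hndef
    set e : Fin n ≃ (Fin d → Bool) := (Fintype.equivFin (Fin d → Bool)).symm with hedef
    refine ⟨_, n, fun _ => r, fun i => Fin.snoc (e i) true, fun i => Fin.snoc (e i) false,
      ?_, ?_, rfl⟩
    · intro i hcontra
      have := congrFun hcontra (Fin.last d)
      simp at this
    · calc M = ∑ u : Fin d → Bool, r • mol (Fin.snoc u true) (Fin.snoc u false) := by
            rw [hMdef]; exact Finset.sum_congr rfl (fun u _ => by rw [mol_snoc])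
        _ = ∑ i : Fin n, r • mol (Fin.snoc (e i) true) (Fin.snoc (e i) false) :=
            (Equiv.sum_comp e (fun u => r • mol (Fin.snoc u true) (Fin.snoc u false))).symm
  · rintro c ⟨n, a, x, y, hxy, hM, rfl⟩
    set T : ℝ := ∑ i : Fin n, |a i| ^ p with hTdef
    have hTnn : 0 ≤ T := Finset.sum_nonneg fun i _ =>
      Real.rpow_nonneg (abs_nonneg _) _
    -- Step A: pointwise mass bound
    have hA : ∀ w : Fin (d+1) → Bool,
        r ≤ ∑ i : Fin n, (if x i = w ∨ y i = w then |a i| else 0) := by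
      intro w
      have hMw : |M w| = r := by
        rw [hMdef, Mval]
        cases hw : w (Fin.last d)
        · rw [if_neg (by simp), abs_neg]; exact abs_of_pos hrpos
        · rw [if_pos rfl]; exact abs_of_pos hrpos
      have hMw2 : M w = ∑ i : Fin n, a i * mol (x i) (y i) w := by
        rw [hM, Finset.sum_apply]; simp [Pi.smul_apply]
      calc r = |M w| := hMw.symm
        _ = |∑ i : Fin n, a i * mol (x i) (y i) w| := by rw [hMw2]
        _ ≤ ∑ i : Fin n, |a i * mol (x i) (y i) w| := Finset.abs_sum_le_sum_abs _ _
        _ ≤ ∑ i : Fin n, (if x i = w ∨ y i = w then |a i| else 0) := by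
            apply Finset.sum_le_sum
            intro i _
            rw [abs_mul]
            calc |a i| * |mol (x i) (y i) w|
                ≤ |a i| * (if x i = w ∨ y i = w then 1 else 0) :=
                  mul_le_mul_of_nonneg_left (abs_mol_le (hxy i)) (abs_nonneg _)
              _ = (if x i = w ∨ y i = w then |a i| else 0) := by
                  split <;> simp
    -- Step B: p-power pointwise bound
    have hB : ∀ w : Fin (d+1) → Bool,
        r ^ p ≤ ∑ i : Fin n, (if x i = w ∨ y i = w then |a i| ^ p else 0) := by
      intro w
      calc r ^ p ≤ (∑ i : Fin n, (if x i = w ∨ y i = w then |a i| else 0)) ^ p :=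
            Real.rpow_le_rpow hrpos.le (hA w) hp0.le
        _ ≤ ∑ i : Fin n, (if x i = w ∨ y i = w then |a i| else 0) ^ p :=
            rpow_sum_le_sum_rpow' _ _ (fun i _ => by split <;> simp [abs_nonneg]) hp0 hp1
        _ = ∑ i : Fin n, (if x i = w ∨ y i = w then |a i| ^ p else 0) := by
            apply Finset.sum_congr rfl
            intro i _
            split
            · rfl
            · exact Real.zero_rpow hp0.ne'
    -- Step C: sum over all vertices; each molecule touches exactly two vertices
    have hC : (2:ℝ) ^ ((d:ℝ) + 1) * r ^ p ≤ 2 * T := by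
      have hsum : ∑ _w : Fin (d+1) → Bool, r ^ p ≤
          ∑ w : Fin (d+1) → Bool, ∑ i : Fin n,
            (if x i = w ∨ y i = w then |a i| ^ p else 0) :=
        Finset.sum_le_sum fun w _ => hB w
      have hleft : ∑ _w : Fin (d+1) → Bool, r ^ p = (2:ℝ) ^ ((d:ℝ)+1) * r ^ p := by
        rw [Finset.sum_const, nsmul_eq_mul]
        congr 1
        have hcard : Fintype.card (Fin (d+1) → Bool) = 2 ^ (d+1) := by
          simp [Fintype.card_fun]
        rw [Finset.card_univ, hcard]
        push_cast
        rw [← Real.rpow_natCast (2:ℝ) (d+1)]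
        push_cast
        ring_nf
      have hright : ∑ w : Fin (d+1) → Bool, ∑ i : Fin n,
          (if x i = w ∨ y i = w then |a i| ^ p else 0) = 2 * T := by
        rw [Finset.sum_comm]
        have hinner : ∀ i : Fin n, ∑ w : Fin (d+1) → Bool,
            (if x i = w ∨ y i = w then |a i| ^ p else 0) = 2 * |a i| ^ p := by
          intro i
          have split_ite : ∀ w : Fin (d+1) → Bool,
              (if x i = w ∨ y i = w then |a i| ^ p else 0)
              = (if x i = w then |a i| ^ p else 0) + (if y i = w then |a i| ^ p else 0) := by
            intro w
            by_cases h1 : x i = w <;> by_cases h2 : y i = w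
            · exact absurd (h1.trans h2.symm) (hxy i)
            · simp [h1, h2]
            · simp [h1, h2]
            · simp [h1, h2]
          rw [Finset.sum_congr rfl (fun w _ => split_ite w), Finset.sum_add_distrib,
            Finset.sum_ite_eq Finset.univ (x i) (fun _ => |a i| ^ p),
            Finset.sum_ite_eq Finset.univ (y i) (fun _ => |a i| ^ p)]
          simp; ring
        rw [Finset.sum_congr rfl (fun i _ => hinner i), ← Finset.mul_sum]
      rw [← hleft, ← hright]; exact hsum
    -- Step D: arithmetic
    have hrp : r ^ p = (2:ℝ) ^ (-(d:ℝ) * p) := by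
      rw [hrdef, ← Real.rpow_neg (by norm_num : (0:ℝ) ≤ 2),
        ← Real.rpow_mul (by norm_num : (0:ℝ) ≤ 2)]
    have hT : (2:ℝ) ^ ((d:ℝ) * (1 - p)) ≤ T := by
      rw [hrp] at hC
      rw [← Real.rpow_add two_pos] at hC
      have h2 : (2:ℝ) ^ ((d:ℝ) + 1 + -(d:ℝ) * p) = 2 * (2:ℝ) ^ ((d:ℝ) * (1 - p)) := by
        rw [show (d:ℝ) + 1 + -(d:ℝ)*p = 1 + (d:ℝ)*(1-p) by ring, Real.rpow_add two_pos,
          Real.rpow_one]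
      rw [h2] at hC
      linarith
    calc ((2 : ℝ) ^ (d : ℝ)) ^ (1 / p - 1)
        = ((2:ℝ) ^ ((d:ℝ) * (1 - p))) ^ (1/p) := by
          rw [← Real.rpow_mul (by norm_num : (0:ℝ) ≤ 2),
            ← Real.rpow_mul (by norm_num : (0:ℝ) ≤ 2)]
          have hpne : p ≠ 0 := hp0.ne'
          congr 1
          field_simp
          try ring
      _ ≤ T ^ (1/p) := Real.rpow_le_rpow (Real.rpow_nonneg (by norm_num) _) hT
          (by positivity)
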